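/- Let p be a prime and γ: ℕ → ℕ satisfy: γ(n) divides n, γ(γ(n)) = γ(n), if m divides n and γ(n) = n then γ(m) = m, and γ(mn) = γ(m)γ(n) whenever gcd(m,n) = 1. Suppose γ(p) < p and (p_n) is a sequence of positive integers whose p-adic valuations tend to infinity. Then γ(p_n)/p_n → 0. -/

import Mathlib

open Filter

/-- Under the axioms for `γ`, if `γ p < p` for a prime `p` and
`(P n)` is a sequence of positive integers whose `p`-adic valuations tend to
infinity, then `γ (P n) / P n → 0`. -/
theorem stmt_1 (γ : ℕ → ℕ)
    (h0 : ∀ n : ℕ, 0 < n → 1 ≤ γ n ∧ γ n ≤ n)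
    (h1 : ∀ n : ℕ, γ n ∣ n)
    (h2 : ∀ n : ℕ, γ (γ n) = γ n)
    (h3 : ∀ m n : ℕ, m ∣ n → γ n = n → γ m = m)
    (h4 : ∀ m n : ℕ, Nat.gcd m n = 1 → γ (m * n) = γ m * γ n)
    (p : ℕ) (hp : p.Prime) (hγp : γ p < p)
    (P : ℕ → ℕ) (hP : ∀ n, 0 < P n)
    (hval : Tendsto (fun n => (P n).factorization p) atTop atTop) :
    Tendsto (fun n => (γ (P n) : ℝ) / (P n : ℝ)) atTop (nhds 0) := by
  have hγpeq : γ p = 1 := by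
    rcases (Nat.Prime.eq_one_or_self_of_dvd hp _ (h1 p)) with h | h
    · exact h
    · omega
  have hγpk : ∀ k, γ (p ^ k) = 1 := by
    intro k
    obtain ⟨j, hj, hpj⟩ := (Nat.dvd_prime_pow hp).mp (h1 (p ^ k))
    rcases Nat.eq_zero_or_pos j with rfl | hjpos
    · simpa using hpj
    · exfalso
      have hpd : p ∣ γ (p ^ k) := hpj ▸ dvd_pow_self p hjpos.ne'
      have hfix := h3 p _ hpd (h2 (p ^ k))
      have h2p := hp.two_le
      omega
  have key : ∀ n, (γ (P n) : ℝ) / P n ≤ ((p:ℝ) ^ ((P n).factorization p))⁻¹ := by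
    intro n
    set k := (P n).factorization p with hk
    have hsplit : P n = p ^ k * (P n / p ^ k) :=
      (Nat.ordProj_mul_ordCompl_eq_self (P n) p).symm
    set s := P n / p ^ k with hs
    have hcop : Nat.gcd (p ^ k) s = 1 :=
      Nat.Coprime.pow_left _ (Nat.coprime_ordCompl hp (hP n).ne')
    have hγeq : γ (P n) = γ s := by
      rw [hsplit, h4 _ _ hcop, hγpk, one_mul]
    have hs0 : 0 < s := Nat.ordCompl_pos p (hP n).ne'
    have hγs : γ s ≤ s := (h0 s hs0).2
    have hp0 : (0:ℝ) < (p:ℝ) := by exact_mod_cast hp.pos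
    have hpk0 : (0:ℝ) < (p:ℝ) ^ k := pow_pos hp0 k
    have hsR : (0:ℝ) < (s:ℝ) := by exact_mod_cast hs0
    rw [hγeq]
    nth_rewrite 1 [hsplit]
    push_cast
    rw [show ((p:ℝ) ^ k)⁻¹ = (s:ℝ) / ((p:ℝ) ^ k * s) from by
      field_simp]
    gcongr
  have h1R : (1:ℝ) < p := by exact_mod_cast hp.one_lt
  have hpow : Tendsto (fun n => (p:ℝ) ^ ((P n).factorization p)) atTop atTop :=
    (tendsto_pow_atTop_atTop_of_one_lt h1R).comp hval
  have hinv : Tendsto (fun n => ((p:ℝ) ^ ((P n).factorization p))⁻¹) atTop (nhds 0) :=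
    tendsto_inv_atTop_zero.comp hpow
  exact squeeze_zero (fun n => by positivity) key hinv
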